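/- Let (R, m) be a Noetherian local ring of prime characteristic p with m-adic completion R̂. If every ideal of R is contracted with respect to Frobenius in the sense that for all ideals J ⊆ R and v ∈ R, v^p ∈ J^{[p]} implies v ∈ J, then every ideal of R̂ has the same property: for every ideal I of R̂ and u ∈ R̂, u^p ∈ I^{[p]} implies u ∈ I. -/

import Mathlib

open Submodule AdicCompletion

variable {R : Type} [CommRing R]

lemma finsetSup_mul {ι : Type} (s : Finset ι) (f : ι → Ideal R) (K : Ideal R) :
    s.sup f * K = s.sup (fun i => f i * K) := by
  classical
  induction s using Finset.induction_on with
  | empty => simp [Ideal.bot_mul]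
  | insert _ _ h ih => simp [Finset.sup_insert, Ideal.sup_mul, ih]

lemma sup_pow_le (I J : Ideal R) (n : ℕ) :
    (I ⊔ J) ^ n ≤ (Finset.range (n+1)).sup (fun k => I ^ k * J ^ (n - k)) := by
  induction n with
  | zero => simp
  | succ n ih =>
    have : (I ⊔ J) ^ (n+1) = (I ⊔ J) ^ n * (I ⊔ J) := pow_succ _ _
    rw [this]
    calc (I ⊔ J) ^ n * (I ⊔ J)
        ≤ (Finset.range (n+1)).sup (fun k => I ^ k * J ^ (n - k)) * (I ⊔ J) :=
          Ideal.mul_mono_left ih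
      _ = (Finset.range (n+1)).sup (fun k => I ^ k * J ^ (n - k) * (I ⊔ J)) :=
          finsetSup_mul _ _ _
      _ ≤ (Finset.range (n+2)).sup (fun k => I ^ k * J ^ (n + 1 - k)) := by
          refine Finset.sup_le fun k hk => ?_
          rw [Finset.mem_range] at hk
          rw [Submodule.mul_sup]
          refine sup_le ?_ ?_
          · -- I^k * J^(n-k) * I = I^(k+1) * J^(n+1-(k+1))
            have : I ^ k * J ^ (n - k) * I = I ^ (k+1) * J ^ (n + 1 - (k+1)) := by
              rw [show n + 1 - (k+1) = n - k from by omega, pow_succ]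
              ring
            exact this.trans_le (Finset.le_sup (f := fun k => I ^ k * J ^ (n + 1 - k))
              (b := k+1) (Finset.mem_range.mpr (by omega)))
          · have : I ^ k * J ^ (n - k) * J = I ^ k * J ^ (n + 1 - k) := by
              have hk' : n + 1 - k = (n - k) + 1 := by omega
              rw [hk', pow_succ]
              ring
            exact this.trans_le (Finset.le_sup (f := fun k => I ^ k * J ^ (n + 1 - k))
              (b := k) (Finset.mem_range.mpr (by omega)))

lemma sup_pow_le' (I J : Ideal R) (i j : ℕ) :
    (I ⊔ J) ^ (i + j) ≤ I ^ i ⊔ J ^ j := by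
  refine (sup_pow_le I J (i+j)).trans (Finset.sup_le fun k hk => ?_)
  rw [Finset.mem_range] at hk
  rcases le_or_gt i k with hik | hik
  · exact le_sup_of_le_left (Ideal.mul_le_left.trans (Ideal.pow_le_pow_right hik))
  · refine le_sup_of_le_right (Ideal.mul_le_right.trans (Ideal.pow_le_pow_right ?_))
    omega

lemma span_pow_le_map_frobenius (p : ℕ) [Fact p.Prime] [CharP R p] (T : Finset R) :
    Ideal.span (T : Set R) ^ (T.card * p + 1) ≤ Ideal.map (frobenius R p) (Ideal.span T) := by
  classical
  induction T using Finset.induction_on with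
  | empty => simp [Ideal.span_empty]
  | @insert x T hx ih =>
    rw [Finset.coe_insert, Ideal.span_insert]
    have hcard : (insert x T).card * p + 1 = p + (T.card * p + 1) := by
      rw [Finset.card_insert_of_notMem hx]; ring
    rw [hcard]
    calc (Ideal.span {x} ⊔ Ideal.span (T : Set R)) ^ (p + (T.card * p + 1))
        ≤ Ideal.span {x} ^ p ⊔ Ideal.span (T : Set R) ^ (T.card * p + 1) :=
          sup_pow_le' _ _ _ _
      _ ≤ Ideal.map (frobenius R p) (Ideal.span {x} ⊔ Ideal.span (T : Set R)) := by
          refine sup_le ?_ (ih.trans (Ideal.map_mono le_sup_right))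
          rw [Ideal.span_singleton_pow]
          rw [Ideal.span_le]
          intro y hy
          rw [Set.mem_singleton_iff] at hy
          subst hy
          have : x ^ p = frobenius R p x := rfl
          rw [this]
          exact Ideal.mem_map_of_mem _ (le_sup_left (α := Ideal R) (Ideal.subset_span rfl))


/-- Transfer Artinian-ness along a quotient-ring scalar extension. -/
lemma isArtinian_of_quotient_tower {J : Ideal R} {M : Type} [AddCommGroup M] [Module R M]
    [Module (R ⧸ J) M] [IsScalarTower R (R ⧸ J) M] (h : IsArtinian (R ⧸ J) M) :
    IsArtinian R M := by
  rw [isArtinian_iff]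
  have emb : ∀ N : Submodule R M, ∃ N' : Submodule (R ⧸ J) M, (N' : Set M) = N := by
    intro N
    refine ⟨{ carrier := N, add_mem' := fun ha hb => N.add_mem ha hb,
              zero_mem' := N.zero_mem, smul_mem' := ?_ }, rfl⟩
    intro c x hx
    obtain ⟨r, rfl⟩ := Ideal.Quotient.mk_surjective c
    have : (Ideal.Quotient.mk J r) • x = r • x := by
      rw [← algebraMap_smul (R ⧸ J) r x]; rfl
    rw [this]
    exact N.smul_mem r hx
  choose F hF using emb
  have hmono : ∀ {N₁ N₂ : Submodule R M}, N₁ < N₂ → F N₁ < F N₂ := by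
    intro N₁ N₂ hlt
    rw [SetLike.lt_iff_le_and_exists] at hlt ⊢
    obtain ⟨hle, x, hx₂, hx₁⟩ := hlt
    refine ⟨?_, x, ?_, ?_⟩
    · intro y hy
      have : y ∈ (N₁ : Set M) := by rw [← hF N₁]; exact hy
      show y ∈ (F N₂ : Set M); rw [hF N₂]; exact hle this
    · show x ∈ (F N₂ : Set M); rw [hF N₂]; exact hx₂
    · show x ∉ (F N₁ : Set M); rw [hF N₁]; exact hx₁
  exact Subrelation.wf (fun {N₁ N₂} hlt => hmono hlt) (InvImage.wf F h.wf)

/-- A finitely generated module killed by the maximal ideal of a local ring is Artinian. -/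
lemma isArtinian_of_killed [IsLocalRing R] (M : Type) [AddCommGroup M] [Module R M]
    [Module.Finite R M]
    (hkill : ∀ r : R, r ∈ IsLocalRing.maximalIdeal R → ∀ x : M, r • x = 0) :
    IsArtinian R M := by
  set m : Ideal R := IsLocalRing.maximalIdeal R
  have htor : Module.IsTorsionBySet R M (m : Set R) := fun x ⟨r, hr⟩ => hkill r hr x
  letI : Module (R ⧸ m) M := htor.module
  haveI : IsScalarTower R (R ⧸ m) M := htor.isScalarTower
  haveI : Module.Finite (R ⧸ m) M := by
    obtain ⟨s, hs⟩ := (Module.finite_def.mp ‹Module.Finite R M›)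
    have hle : (⊤ : Submodule R M) ≤ (span (R ⧸ m) (s : Set M)).restrictScalars R := by
      rw [← hs]; exact Submodule.span_le.mpr Submodule.subset_span
    exact ⟨⟨s, eq_top_iff.mpr fun x _ => hle trivial⟩⟩
  letI : Field (R ⧸ m) := Ideal.Quotient.field m
  haveI : IsArtinianRing (R ⧸ m) := inferInstance
  haveI : IsArtinian (R ⧸ m) M := isArtinian_of_fg_of_artinian'
  exact isArtinian_of_quotient_tower this

/-- Quotients of finite modules by `m^n`-multiples are Artinian over a Noetherian local ring. -/
lemma isArtinian_of_pow_smul [IsLocalRing R] [IsNoetherianRing R] :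
    ∀ (n : ℕ) (M : Type) [AddCommGroup M] [Module R M] [Module.Finite R M],
      ((IsLocalRing.maximalIdeal R) ^ n • (⊤ : Submodule R M) = ⊥) → IsArtinian R M := by
  intro n
  induction n with
  | zero =>
    intro M _ _ _ hM
    simp only [pow_zero, Ideal.one_eq_top, Submodule.top_smul] at hM
    haveI : Subsingleton M := subsingleton_iff_forall_eq 0 |>.mpr
      (fun x => by have := hM ▸ Submodule.mem_top (R := R) (x := x); simpa using this)
    infer_instance
  | succ n ih =>
    intro M _ _ _ hM
    set m : Ideal R := IsLocalRing.maximalIdeal R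
    set N : Submodule R M := m ^ n • ⊤
    haveI : Module.Finite R N := Module.Finite.iff_fg.mpr (IsNoetherian.noetherian N)
    haveI hNart : IsArtinian R N := by
      refine isArtinian_of_killed N (fun r hr x => ?_)
      have hx : r • (x : M) ∈ m • (m ^ n • (⊤ : Submodule R M)) :=
        Submodule.smul_mem_smul hr x.2
      rw [← Submodule.smul_assoc, smul_eq_mul, ← pow_succ'] at hx
      rw [hM] at hx
      exact Subtype.ext (by simpa using hx)
    haveI hQart : IsArtinian R (M ⧸ N) := by
      refine ih (M ⧸ N) ?_
      rw [eq_bot_iff]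
      rintro x hx
      have : m ^ n • (⊤ : Submodule R (M ⧸ N)) = Submodule.map N.mkQ (m ^ n • ⊤) := by
        rw [Submodule.map_smul'', Submodule.map_top, Submodule.range_mkQ]
      rw [this] at hx
      obtain ⟨y, hy, rfl⟩ := hx
      simpa [Submodule.Quotient.mk_eq_zero] using hy
    exact isArtinian_of_range_eq_ker N.subtype N.mkQ
      (by rw [Submodule.range_subtype, Submodule.ker_mkQ])

/-- Mittag-Leffler style key lemma: if `u` lies in the span of `b` modulo every level of the
completion, then it lies in the span of `b`. -/
lemma key_limit [IsLocalRing R] [IsNoetherianRing R] {r : ℕ}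
    (β : Fin r → AdicCauchySequence (IsLocalRing.maximalIdeal R) R)
    (u : AdicCompletion (IsLocalRing.maximalIdeal R) R)
    (H : ∀ n : ℕ, ∃ τ : Fin r → R,
      u.val n = Submodule.Quotient.mk (∑ j, (β j) n * τ j)) :
    ∃ c : Fin r → AdicCompletion (IsLocalRing.maximalIdeal R) R,
      u = ∑ j, c j * AdicCompletion.mk _ R (β j) := by
  classical
  -- the level maps
  set Θ : (n : ℕ) →
      ((Fin r → R) →ₗ[R] (R ⧸ ((IsLocalRing.maximalIdeal R) ^ n • ⊤ : Submodule R R))) :=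
    fun n => (Submodule.mkQ _).comp
      (∑ j : Fin r, (β j) n • LinearMap.proj j) with hΘ
  have Θ_apply : ∀ (n : ℕ) (τ : Fin r → R),
      Θ n τ = Submodule.Quotient.mk (∑ j, (β j) n * τ j) := by
    intro n τ
    simp [hΘ, LinearMap.sum_apply, LinearMap.smul_apply, LinearMap.proj_apply, smul_eq_mul]
  have compat : ∀ {s n : ℕ} (hsn : s ≤ n) (τ : Fin r → R),
      AdicCompletion.transitionMap (IsLocalRing.maximalIdeal R) R hsn (Θ n τ) = Θ s τ := by
    intro s n hsn τ
    rw [Θ_apply, Θ_apply, AdicCompletion.transitionMap, Submodule.factorPow, ← Submodule.mkQ_apply,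
      Submodule.factor_mk, Submodule.mkQ_apply]
    rw [Submodule.Quotient.eq]
    rw [← Finset.sum_sub_distrib]
    refine Submodule.sum_mem _ fun j _ => ?_
    have hd : (β j) n - (β j) s ∈ ((IsLocalRing.maximalIdeal R) ^ s • ⊤ : Submodule R R) :=
      SModEq.sub_mem.mp ((β j).property hsn).symm
    have he : (β j) n * τ j - (β j) s * τ j = ((β j) n - (β j) s) * τ j := by ring
    rw [he]
    exact Ideal.mul_mem_right _ _ hd
  -- fibers
  have Hu : ∀ n : ℕ, ∃ τ : Fin r → R, Θ n τ = u.val n := by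
    intro n
    obtain ⟨τ, hτ⟩ := H n
    exact ⟨τ, by rw [Θ_apply, ← hτ]⟩
  set G : ℕ → Set (Fin r → R) := fun n => {τ | Θ n τ = u.val n} with hG
  have G_nonempty : ∀ n, (G n).Nonempty := fun n => Hu n
  have G_mono : ∀ {s n : ℕ}, s ≤ n → G n ⊆ G s := by
    intro s n hsn τ hτ
    show Θ s τ = u.val s
    rw [← compat hsn τ, show Θ n τ = u.val n from hτ, u.property hsn]
  set N : ℕ → Submodule R (Fin r → R) := fun n => LinearMap.ker (Θ n) with hN
  have N_mono : ∀ {s n : ℕ}, s ≤ n → N n ≤ N s := by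
    intro s n hsn τ hτ
    have hτ' : Θ n τ = 0 := hτ
    show Θ s τ = 0
    rw [← compat hsn τ, hτ']
    exact LinearMap.map_zero _
  have G_sub : ∀ (n : ℕ) (τ σ : Fin r → R), τ ∈ G n → σ ∈ G n → τ - σ ∈ N n := by
    intro n τ σ hτ hσ
    show Θ n (τ - σ) = 0
    rw [map_sub, show Θ n τ = u.val n from hτ, show Θ n σ = u.val n from hσ, sub_self]
  have G_add : ∀ (n : ℕ) (τ σ : Fin r → R), τ ∈ G n → σ ∈ N n → τ + σ ∈ G n := by
    intro n τ σ hτ hσ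
    show Θ n (τ + σ) = u.val n
    rw [map_add, show Θ n τ = u.val n from hτ, show Θ n σ = 0 from hσ, add_zero]
  -- the congruence submodules
  set Φ : (n : ℕ) →
      ((Fin r → R) →ₗ[R] (Fin r → R ⧸ ((IsLocalRing.maximalIdeal R) ^ n • ⊤ : Submodule R R))) :=
    fun n => LinearMap.pi (fun j => (Submodule.mkQ _).comp (LinearMap.proj j)) with hΦ
  set K : ℕ → Submodule R (Fin r → R) := fun n => LinearMap.ker (Φ n) with hK
  have K_mem : ∀ (n : ℕ) (τ : Fin r → R),
      τ ∈ K n ↔ ∀ j, τ j ∈ ((IsLocalRing.maximalIdeal R) ^ n • ⊤ : Submodule R R) := by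
    intro n τ
    constructor
    · intro hτ j
      have h0 : Φ n τ = 0 := hτ
      have h1 : (Submodule.Quotient.mk (τ j) :
          R ⧸ ((IsLocalRing.maximalIdeal R) ^ n • ⊤ : Submodule R R)) = 0 := congrFun h0 j
      exact (Submodule.Quotient.mk_eq_zero _).mp h1
    · intro hτ
      show Φ n τ = 0
      funext j
      show (Submodule.Quotient.mk (τ j) :
          R ⧸ ((IsLocalRing.maximalIdeal R) ^ n • ⊤ : Submodule R R)) = 0
      exact (Submodule.Quotient.mk_eq_zero _).mpr (hτ j)
  have K_le_N : ∀ n, K n ≤ N n := by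
    intro n τ hτ
    show Θ n τ = 0
    rw [Θ_apply, Submodule.Quotient.mk_eq_zero]
    exact Submodule.sum_mem _ fun j _ => Ideal.mul_mem_left _ _ ((K_mem n τ).mp hτ j)
  -- Artinianness at each level
  have artn : ∀ n : ℕ,
      IsArtinian R (Fin r → R ⧸ ((IsLocalRing.maximalIdeal R) ^ n • ⊤ : Submodule R R)) := by
    intro n
    haveI : IsArtinian R (R ⧸ ((IsLocalRing.maximalIdeal R) ^ n • ⊤ : Submodule R R)) := by
      refine isArtinian_of_pow_smul n _ ?_
      rw [eq_bot_iff]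
      rintro x hx
      have heq : (IsLocalRing.maximalIdeal R) ^ n •
          (⊤ : Submodule R (R ⧸ ((IsLocalRing.maximalIdeal R) ^ n • ⊤ : Submodule R R)))
          = Submodule.map (Submodule.mkQ _) ((IsLocalRing.maximalIdeal R) ^ n • ⊤) := by
        rw [Submodule.map_smul'', Submodule.map_top, Submodule.range_mkQ]
      rw [heq] at hx
      obtain ⟨y, hy, rfl⟩ := hx
      show (Submodule.Quotient.mk y :
          R ⧸ ((IsLocalRing.maximalIdeal R) ^ n • ⊤ : Submodule R R)) ∈ ⊥
      rw [Submodule.mem_bot, Submodule.Quotient.mk_eq_zero]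
      exact hy
    exact isArtinian_pi'
  -- the decreasing chains and their stabilization
  set P : ℕ → ℕ → Submodule R (Fin r → R) := fun n k => N (n + k) ⊔ K n with hP
  have P_anti : ∀ (n : ℕ) {k l : ℕ}, k ≤ l → P n l ≤ P n k := by
    intro n k l hkl
    exact sup_le_sup_right (N_mono (by omega)) _
  have P_stab : ∀ n : ℕ, ∃ k0, ∀ k, k0 ≤ k → P n k = P n k0 := by
    intro n
    have hdown : ∀ k, Submodule.comap (Φ n) (Submodule.map (Φ n) (P n k)) = P n k := by
      intro k
      rw [Submodule.comap_map_eq]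
      exact sup_eq_left.mpr (le_sup_right (a := N (n + k)))
    haveI := artn n
    obtain ⟨k0, hk0⟩ := IsArtinian.monotone_stabilizes
      (⟨fun k => OrderDual.toDual (Submodule.map (Φ n) (P n k)),
        fun k l hkl => OrderDual.toDual_le_toDual.mpr (Submodule.map_mono (P_anti n hkl))⟩ :
        ℕ →o (Submodule R
          (Fin r → R ⧸ ((IsLocalRing.maximalIdeal R) ^ n • ⊤ : Submodule R R)))ᵒᵈ)
    refine ⟨k0, fun k hk => ?_⟩
    rw [← hdown k, ← hdown k0,
      show Submodule.map (Φ n) (P n k) = Submodule.map (Φ n) (P n k0) from (hk0 k hk).symm]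
  choose k0 hk0 using P_stab
  -- the limit-admissible sets
  set E : ℕ → Set (Fin r → R) := fun n =>
    {τ | ∃ σ ∈ G (n + k0 n), τ - σ ∈ K n} with hE
  have E_eq : ∀ (n k : ℕ), k0 n ≤ k → E n = {τ | ∃ σ ∈ G (n + k), τ - σ ∈ K n} := by
    intro n k hk
    apply Set.Subset.antisymm
    · rintro τ ⟨σ0, hσ0, hκ⟩
      obtain ⟨σ1, hσ1⟩ := G_nonempty (n + k)
      have hσ1' : σ1 ∈ G (n + k0 n) := G_mono (by omega) hσ1
      have hsub : σ0 - σ1 ∈ N (n + k0 n) := G_sub _ _ _ hσ0 hσ1'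
      have hmem : σ0 - σ1 ∈ P n k := by
        rw [hk0 n k hk]
        exact (le_sup_left (a := N (n + k0 n)) (b := K n)) hsub
      obtain ⟨ν, hν, κ', hκ', hvk⟩ := Submodule.mem_sup.mp hmem
      refine ⟨σ1 + ν, G_add _ _ _ hσ1 hν, ?_⟩
      have h1 : κ' = σ0 - σ1 - ν := by rw [← hvk]; abel
      have h2 : τ - (σ1 + ν) = (τ - σ0) + (σ0 - σ1 - ν) := by abel
      rw [h2, ← h1]
      exact (K n).add_mem hκ hκ'
    · rintro τ ⟨σ1, hσ1, hκ⟩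
      exact ⟨σ1, G_mono (by omega) hσ1, hκ⟩
  have E_nonempty : ∀ n, (E n).Nonempty := by
    intro n
    obtain ⟨σ, hσ⟩ := G_nonempty (n + k0 n)
    exact ⟨σ, σ, hσ, by rw [sub_self]; exact (K n).zero_mem⟩
  have E_in_G : ∀ n, E n ⊆ G n := by
    rintro n τ ⟨σ, hσ, hκ⟩
    have h1 : τ = σ + (τ - σ) := by abel
    rw [h1]
    exact G_add _ _ _ (G_mono (by omega) hσ) (K_le_N n hκ)
  have E_step : ∀ n, ∀ τ ∈ E n, ∃ τ', τ' ∈ E (n+1) ∧ τ - τ' ∈ K n := by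
    intro n τ hτ
    set k := max (k0 n) (k0 (n+1) + 1) with hk
    rw [E_eq n k (le_max_left _ _)] at hτ
    obtain ⟨σ, hσ, hκ⟩ := hτ
    refine ⟨σ, ?_, hκ⟩
    rw [E_eq (n+1) (k-1) (by omega)]
    refine ⟨σ, ?_, by rw [sub_self]; exact (K (n+1)).zero_mem⟩
    have h3 : n + 1 + (k - 1) = n + k := by omega
    rw [h3]
    exact hσ
  -- recursive choice of a compatible sequence
  obtain ⟨τ0, hτ0⟩ := E_nonempty 0
  let T : (n : ℕ) → {τ : Fin r → R // τ ∈ E n} := fun n =>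
    Nat.rec ⟨τ0, hτ0⟩
      (fun n prev => ⟨(E_step n prev.1 prev.2).choose,
        (E_step n prev.1 prev.2).choose_spec.1⟩) n
  have T_diff : ∀ n, (T n).1 - (T (n+1)).1 ∈ K n := fun n =>
    (E_step n (T n).1 (T n).2).choose_spec.2
  -- assemble the coefficient sequences
  have cauchy : ∀ j : Fin r, ∀ n : ℕ,
      (T n).1 j ≡ (T (n+1)).1 j
        [SMOD ((IsLocalRing.maximalIdeal R) ^ n • ⊤ : Submodule R R)] := by
    intro j n
    rw [SModEq.sub_mem]
    have := (K_mem n _).mp (T_diff n) j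
    simpa using this
  refine ⟨fun j => AdicCompletion.mk _ R
    (AdicCauchySequence.mk _ R (fun n => (T n).1 j) (cauchy j)), ?_⟩
  apply AdicCompletion.ext
  intro n
  rw [AdicCompletion.val_sum_apply]
  have hTG : Θ n (T n).1 = u.val n := E_in_G n (T n).2
  rw [← hTG, Θ_apply]
  have hterm : ∀ j : Fin r,
      ((AdicCompletion.mk _ R (AdicCauchySequence.mk _ R (fun n => (T n).1 j) (cauchy j))) *
        (AdicCompletion.mk _ R (β j))).val n
      = Submodule.Quotient.mk ((T n).1 j * (β j) n) := by
    intro j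
    rw [AdicCompletion.val_mul, AdicCompletion.mk_apply_coe, AdicCompletion.mk_apply_coe]
    rfl
  rw [Finset.sum_congr rfl (fun j _ => hterm j)]
  have hsum : (∑ j : Fin r, (Submodule.Quotient.mk ((T n).1 j * (β j) n) :
      R ⧸ ((IsLocalRing.maximalIdeal R) ^ n • ⊤ : Submodule R R)))
      = Submodule.Quotient.mk (∑ j : Fin r, (T n).1 j * (β j) n) := by
    exact (map_sum (Submodule.mkQ ((IsLocalRing.maximalIdeal R) ^ n • ⊤ : Submodule R R))
      (fun j : Fin r => (T n).1 j * (β j) n) Finset.univ).symm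
  rw [hsum]
  congr 1
  exact Finset.sum_congr rfl fun j _ => mul_comm _ _

theorem stmt4 (R : Type) [CommRing R] [IsNoetherianRing R] [IsLocalRing R]
    (p : ℕ) (hp : p.Prime) [CharP R p]
    (h : ∀ (J : Ideal R) (v : R),
        v ^ p ∈ Ideal.span ((fun a => a ^ p) '' (J : Set R)) → v ∈ J) :
    ∀ (I : Ideal (AdicCompletion (IsLocalRing.maximalIdeal R) R))
      (u : AdicCompletion (IsLocalRing.maximalIdeal R) R),
        u ^ p ∈ Ideal.span ((fun a => a ^ p) '' (I : Set _)) → u ∈ I := by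
  intro I u hu
  haveI : Fact p.Prime := ⟨hp⟩
  classical
  have hst : ∀ n : ℕ, ((IsLocalRing.maximalIdeal R) ^ n • ⊤ : Ideal R)
      = (IsLocalRing.maximalIdeal R) ^ n := fun n => by ext x; simp
  -- frobenius as a map
  have hfrobfun : ⇑(frobenius R p) = fun a : R => a ^ p := funext (fun a => frobenius_def p a)
  have hmapJ : ∀ J : Ideal R,
      Ideal.span ((fun a => a ^ p) '' (J : Set R)) = Ideal.map (frobenius R p) J := by
    intro J
    rw [Ideal.map, hfrobfun]
  -- Step 1 : write `u ^ p` as a finite combination of `p`-th powers of elements of `I`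
  obtain ⟨r, c, b', hb'⟩ := mem_span_set'.mp hu
  have hb : ∀ i, ∃ bi : AdicCompletion (IsLocalRing.maximalIdeal R) R,
      bi ∈ I ∧ (b' i : AdicCompletion (IsLocalRing.maximalIdeal R) R) = bi ^ p := by
    intro i
    obtain ⟨bi, hbi, he⟩ := (b' i).2
    exact ⟨bi, hbi, he.symm⟩
  choose b hbI hbp using hb
  simp only [smul_eq_mul, hbp] at hb'
  -- Cauchy representatives
  choose β hβ using fun j => AdicCompletion.mk_surjective (IsLocalRing.maximalIdeal R) R (b j)
  choose γ hγ using fun j => AdicCompletion.mk_surjective (IsLocalRing.maximalIdeal R) R (c j)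
  obtain ⟨υ, hυ⟩ := AdicCompletion.mk_surjective (IsLocalRing.maximalIdeal R) R u
  -- the uniform Frobenius-power estimate
  obtain ⟨T, hT⟩ := IsNoetherian.noetherian (IsLocalRing.maximalIdeal R)
  have hfrob : ∀ (J : Ideal R) (s : ℕ), (IsLocalRing.maximalIdeal R) ^ s ≤ J →
      (IsLocalRing.maximalIdeal R) ^ ((T.card * p + 1) * s) ≤ Ideal.map (frobenius R p) J := by
    intro J s hsJ
    calc (IsLocalRing.maximalIdeal R) ^ ((T.card * p + 1) * s)
        = ((IsLocalRing.maximalIdeal R) ^ (T.card * p + 1)) ^ s := by rw [← pow_mul]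
      _ ≤ (Ideal.map (frobenius R p) (IsLocalRing.maximalIdeal R)) ^ s := by
          refine Ideal.pow_right_mono ?_ s
          rw [← hT]
          exact span_pow_le_map_frobenius p T
      _ = Ideal.map (frobenius R p) ((IsLocalRing.maximalIdeal R) ^ s) :=
          (Ideal.map_pow _ _ _).symm
      _ ≤ Ideal.map (frobenius R p) J := Ideal.map_mono hsJ
  -- Step 2 : the level hypothesis for `key_limit`
  have H : ∀ n : ℕ, ∃ τ : Fin r → R,
      u.val n = Submodule.Quotient.mk (∑ j, (β j) n * τ j) := by
    intro s
    set B : Ideal R := Ideal.span (Set.range (fun j => (β j) s)) with hB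
    set J : Ideal R := B ⊔ (IsLocalRing.maximalIdeal R) ^ s with hJ
    set n : ℕ := (T.card * p + 1) * s with hn
    have hns : s ≤ n := Nat.le_mul_of_pos_left s (by positivity)
    -- evaluate the defining relation at level n
    have hval : (Submodule.Quotient.mk (υ n ^ p) :
        R ⧸ ((IsLocalRing.maximalIdeal R) ^ n • ⊤ : Submodule R R))
        = Submodule.Quotient.mk (∑ j, γ j n * (β j) n ^ p) := by
      have h1 : (u ^ p).val n = (u.val n) ^ p := rfl
      have h2 : u.val n = Submodule.Quotient.mk (υ n) := by
        rw [← hυ, AdicCompletion.mk_apply_coe]; rfl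
      have h3 : (u ^ p).val n = ∑ j, (c j).val n * ((b j).val n) ^ p := by
        rw [← hb', AdicCompletion.val_sum_apply]
        refine Finset.sum_congr rfl fun j _ => ?_
        rw [AdicCompletion.val_mul]
        rfl
      have h4 : ∀ j : Fin r, (c j).val n = Submodule.Quotient.mk (γ j n) := by
        intro j; rw [← hγ, AdicCompletion.mk_apply_coe]; rfl
      have h5 : ∀ j : Fin r, (b j).val n = Submodule.Quotient.mk ((β j) n) := by
        intro j; rw [← hβ, AdicCompletion.mk_apply_coe]; rfl
      calc (Submodule.Quotient.mk (υ n ^ p) :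
          R ⧸ ((IsLocalRing.maximalIdeal R) ^ n • ⊤ : Submodule R R))
          = (Submodule.Quotient.mk (υ n)) ^ p := rfl
        _ = (u.val n) ^ p := by rw [h2]
        _ = (u ^ p).val n := h1.symm
        _ = ∑ j, (c j).val n * ((b j).val n) ^ p := h3
        _ = ∑ j, Submodule.Quotient.mk (γ j n * (β j) n ^ p) := by
            refine Finset.sum_congr rfl fun j _ => ?_
            rw [h4 j, h5 j]
            rfl
        _ = Submodule.Quotient.mk (∑ j, γ j n * (β j) n ^ p) :=
            (map_sum (Submodule.mkQ _) _ _).symm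
    -- hence `υ n ^ p` lies in the Frobenius power of `J`
    have hβJ : ∀ j : Fin r, (β j) n ∈ J := by
      intro j
      have h6 : (β j) n - (β j) s ∈ (IsLocalRing.maximalIdeal R) ^ s := by
        rw [← hst s]
        exact SModEq.sub_mem.mp ((β j).property hns).symm
      have h7 : (β j) s ∈ B := Ideal.subset_span ⟨j, rfl⟩
      have h8 : (β j) n = (β j) s + ((β j) n - (β j) s) := by ring
      rw [h8]
      exact J.add_mem (Ideal.mem_sup_left h7) (Ideal.mem_sup_right h6)
    have hv : υ n ^ p ∈ Ideal.map (frobenius R p) J := by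
      have h9 : υ n ^ p - (∑ j, γ j n * (β j) n ^ p) ∈ (IsLocalRing.maximalIdeal R) ^ n := by
        rw [← hst n]
        exact (Submodule.Quotient.eq _).mp hval
      have h10 : (∑ j, γ j n * (β j) n ^ p) ∈ Ideal.map (frobenius R p) J := by
        refine Ideal.sum_mem _ fun j _ => Ideal.mul_mem_left _ _ ?_
        have : (β j) n ^ p = frobenius R p ((β j) n) := rfl
        rw [this]
        exact Ideal.mem_map_of_mem _ (hβJ j)
      have h11 : υ n ^ p = (υ n ^ p - (∑ j, γ j n * (β j) n ^ p))
          + (∑ j, γ j n * (β j) n ^ p) := by ring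
      rw [h11]
      exact (Ideal.map (frobenius R p) J).add_mem (hfrob J s le_sup_right h9) h10
    -- contract with the hypothesis `h`
    have hvJ : υ n ∈ J := h J (υ n) (by rw [hmapJ J]; exact hv)
    obtain ⟨bb, hbb, mm, hmm, hsum⟩ := Submodule.mem_sup.mp hvJ
    obtain ⟨τ, hτ⟩ := (mem_span_range_iff_exists_fun R).mp hbb
    refine ⟨τ, ?_⟩
    have h12 : u.val s = Submodule.Quotient.mk (υ s) := by
      rw [← hυ, AdicCompletion.mk_apply_coe]; rfl
    rw [h12, Submodule.Quotient.eq]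
    have h13 : υ s - υ n ∈ ((IsLocalRing.maximalIdeal R) ^ s • ⊤ : Submodule R R) :=
      SModEq.sub_mem.mp (υ.property hns)
    have h14 : υ n - (∑ j, (β j) s * τ j) = mm := by
      rw [← hsum, ← hτ]
      have : ∑ j, τ j • (β j) s = ∑ j, (β j) s * τ j := by
        refine Finset.sum_congr rfl fun j _ => ?_
        rw [smul_eq_mul, mul_comm]
      rw [this]; ring
    have h15 : υ s - (∑ j, (β j) s * τ j)
        = (υ s - υ n) + (υ n - (∑ j, (β j) s * τ j)) := by ring
    rw [h15, h14]
    refine Submodule.add_mem _ h13 ?_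
    rw [hst s]
    exact hmm
  obtain ⟨cc, hcc⟩ := key_limit β u H
  rw [hcc]
  refine Ideal.sum_mem I fun j _ => ?_
  rw [hβ j]
  exact I.mul_mem_left _ (hbI j)
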